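/- arXiv:1708.00728 — 7 statements merged into one kernel-verified Lean document; each statement's English description precedes it below -/
import Mathlib

section
/- Let G be a connected undirected graph with n nodes and incidence matrix B ∈ ℝ^{n×m}, let E = [I_p ; 0_{(n−p)×p}] ∈ ℝ^{n×p} with p ≥ 1, let Q ∈ ℝ^{p×p} be diagonal with strictly positive diagonal entries, r ∈ ℝ^p, s ∈ ℝ and d ∈ ℝ^n. Consider minimizing C(u) = ½ uᵀQu + rᵀu + s over all u ∈ ℝ^p for which there exists λ ∈ ℝ^m with 0 = −Bλ + Eu − d. Then the unique minimizer is ū = Q⁻¹(λ*·1_p − r), where λ* = (1_nᵀ d + 1_pᵀ Q⁻¹ r)/(1_pᵀ Q⁻¹ 1_p): that is, ū is feasible and C(ū) < C(u) for every other feasible u ≠ ū. -/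
open Matrix BigOperators Filter Topology MeasureTheory

/-- An undirected graph on `Fin n` with `m` edges, each edge given an arbitrary
orientation: edge `k` goes from its positive end `pos k` to its negative end `neg k`. -/
structure OrientedGraph (n m : ℕ) where
  pos : Fin m → Fin n
  neg : Fin m → Fin n
  ne_ends : ∀ k, pos k ≠ neg k

namespace OrientedGraph

variable {n m : ℕ}

/-- The oriented incidence matrix `B ∈ ℝ^{n×m}`. -/
def inc (G : OrientedGraph n m) : Matrix (Fin n) (Fin m) ℝ :=
  Matrix.of fun i k => if i = G.pos k then (1 : ℝ) else if i = G.neg k then -1 else 0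

/-- Adjacency in the underlying undirected graph. -/
def Adj (G : OrientedGraph n m) (i j : Fin n) : Prop :=
  ∃ k, (G.pos k = i ∧ G.neg k = j) ∨ (G.pos k = j ∧ G.neg k = i)

/-- Connectedness of the underlying undirected graph. -/
def Connected (G : OrientedGraph n m) : Prop :=
  ∀ i j : Fin n, Relation.ReflTransGen G.Adj i j

end OrientedGraph

/-- The matrix `E = [I_p ; 0_{(n-p)×p}]` selecting the first `p` nodes. -/
def selE (n p : ℕ) : Matrix (Fin n) (Fin p) ℝ :=
  Matrix.of fun i j => if (i : ℕ) = (j : ℕ) then 1 else 0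

/-- Componentwise application of a family of scalar functions. -/
def cw {k : ℕ} (f : Fin k → ℝ → ℝ) (x : Fin k → ℝ) : Fin k → ℝ :=
  fun i => f i (x i)

/-- `λ* = (1ₙᵀ d + 1ₚᵀ Q⁻¹ r)/(1ₚᵀ Q⁻¹ 1ₚ)` for `Q = diag q`. -/
noncomputable def lamStar {n p : ℕ} (q r : Fin p → ℝ) (d : Fin n → ℝ) : ℝ :=
  ((∑ i, d i) + ∑ i, r i / q i) / (∑ i, (q i)⁻¹)

/-- The optimal input `ū = Q⁻¹(λ*·1ₚ − r)`. -/
noncomputable def uOpt {n p : ℕ} (q r : Fin p → ℝ) (d : Fin n → ℝ) : Fin p → ℝ :=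
  fun i => (lamStar q r d - r i) / q i

/-- The cost `C(u) = ½ uᵀQu + rᵀu + s` for `Q = diag q`. -/
noncomputable def cost {p : ℕ} (q r : Fin p → ℝ) (s : ℝ) (u : Fin p → ℝ) : ℝ :=
  (1 / 2) * (∑ i, q i * u i ^ 2) + (∑ i, r i * u i) + s

/-- `L` is the Laplacian matrix of a balanced, strongly connected weighted digraph:
nonpositive off-diagonal entries, zero row sums, zero column sums, and the digraph
whose arcs are the pairs with `L i j < 0` is strongly connected. -/
structure IsBalancedStronglyConnectedLaplacian {p : ℕ} (L : Matrix (Fin p) (Fin p) ℝ) : Prop where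
  offdiag_nonpos : ∀ i j, i ≠ j → L i j ≤ 0
  rowsum : L.mulVec (fun _ => 1) = 0
  colsum : Matrix.vecMul (fun _ => 1) L = 0
  sconn : ∀ i j : Fin p, Relation.ReflTransGen (fun a b => a ≠ b ∧ L a b < 0) i j

-- columns of incidence matrix sum to zero
private lemma sum_col_inc {n m : ℕ} (G : OrientedGraph n m) (k : Fin m) :
    ∑ i, G.inc i k = 0 := by
  have h := G.ne_ends k
  have he : ∀ i : Fin n, G.inc i k =
      (if i = G.pos k then (1:ℝ) else 0) + (if i = G.neg k then -1 else 0) := by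
    intro i
    by_cases h1 : i = G.pos k
    · subst h1; simp [OrientedGraph.inc, h]
    · by_cases h2 : i = G.neg k <;> simp [OrientedGraph.inc, h1, h2, Ne.symm h]
  simp [he, Finset.sum_add_distrib]

-- any zero-sum vector is in the range of the incidence matrix
private lemma exists_lam {n m : ℕ} (hn : 0 < n) (G : OrientedGraph n m) (hG : G.Connected)
    (x : Fin n → ℝ) (hx : ∑ i, x i = 0) :
    ∃ lam : Fin m → ℝ, G.inc.mulVec lam = x := by
  set R := LinearMap.range G.inc.mulVecLin with hR
  have hadj : ∀ i j, G.Adj i j →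
      (Pi.single i 1 - Pi.single j 1 : Fin n → ℝ) ∈ R := by
    rintro i j ⟨k, hk | hk⟩
    · refine ⟨Pi.single k 1, ?_⟩
      rw [Matrix.mulVecLin_apply, Matrix.mulVec_single]
      funext i'
      have hne := G.ne_ends k
      simp only [Pi.sub_apply, Pi.single_apply, mul_one, OrientedGraph.inc, Matrix.of_apply,
        hk.1, hk.2]
      by_cases h1 : i' = i
      · subst h1; simp [hk.1, hk.2, show i' ≠ j from fun h => hne (by rw [hk.1, hk.2, h])]
      · have hji : ¬ (j = i) := fun h => hne (by rw [hk.1, hk.2, h])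
        by_cases h2 : i' = j <;> simp [hk.1, hk.2, h1, h2, hji]
    · refine ⟨Pi.single k (-1), ?_⟩
      rw [Matrix.mulVecLin_apply, Matrix.mulVec_single]
      funext i'
      have hne := G.ne_ends k
      simp only [Pi.sub_apply, Pi.single_apply, OrientedGraph.inc, Matrix.of_apply,
        hk.1, hk.2]
      by_cases h1 : i' = i
      · subst h1; simp [hk.1, hk.2, show i' ≠ j from fun h => hne (by rw [hk.1, hk.2, h.symm])]
      · have hji : ¬ (j = i) := fun h => hne (by rw [hk.1, hk.2, h])
        by_cases h2 : i' = j <;> simp [hk.1, hk.2, h1, h2, hji]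
  have hrtg : ∀ i j : Fin n, (Pi.single i 1 - Pi.single j 1 : Fin n → ℝ) ∈ R := by
    intro i j
    induction hG i j with
    | refl => simp
    | @tail b c _ hbc ih =>
        have h2 := hadj b c hbc
        have := Submodule.add_mem R ih h2
        rwa [sub_add_sub_cancel] at this
  have i0 : Fin n := ⟨0, hn⟩
  have hxr : x = ∑ j, x j • (Pi.single j 1 - Pi.single i0 1 : Fin n → ℝ) := by
    funext i
    simp only [Finset.sum_apply, Pi.smul_apply, Pi.sub_apply, Pi.single_apply, smul_eq_mul,
      mul_sub, Finset.sum_sub_distrib]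
    by_cases hi : i = i0
    · simp [hi, mul_ite, Finset.sum_ite_eq, hx]
    · simp [hi, mul_ite, Finset.sum_ite_eq]
  have hmem : x ∈ R := by
    rw [hxr]
    exact Submodule.sum_mem R fun j _ => Submodule.smul_mem R _ (hrtg j i0)
  exact hmem


-- sum of E.mulVec u equals sum of u
private lemma sum_selE {n p : ℕ} (hpn : p ≤ n) (u : Fin p → ℝ) :
    ∑ i, (selE n p).mulVec u i = ∑ j, u j := by
  have he : ∀ (j : Fin p) (i : Fin n),
      (if (i : ℕ) = (j : ℕ) then (1:ℝ) else 0) * u j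
        = if i = Fin.castLE hpn j then u j else 0 := by
    intro j i
    by_cases h : i = Fin.castLE hpn j
    · subst h; simp [Fin.castLE]
    · have h' : (i : ℕ) ≠ (j : ℕ) := fun hc => h (Fin.ext (by simpa using hc))
      simp [h', h]
  unfold selE Matrix.mulVec dotProduct
  rw [Finset.sum_comm]
  refine Finset.sum_congr rfl fun j _ => ?_
  simp only [Matrix.of_apply]
  rw [Finset.sum_congr rfl fun i _ => he j i, Finset.sum_ite_eq']
  simp

-- sum of B.mulVec lam is zero
private lemma sum_inc_mulVec {n m : ℕ} (G : OrientedGraph n m) (lam : Fin m → ℝ) :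
    ∑ i, G.inc.mulVec lam i = 0 := by
  unfold Matrix.mulVec dotProduct
  rw [Finset.sum_comm]
  refine Finset.sum_eq_zero fun k _ => ?_
  rw [← Finset.sum_mul, sum_col_inc, zero_mul]

-- feasibility implies sum constraint
private lemma feas_sum {n m p : ℕ} (hpn : p ≤ n) (G : OrientedGraph n m) (u : Fin p → ℝ)
    (d : Fin n → ℝ) (lam : Fin m → ℝ)
    (h : (0 : Fin n → ℝ) = -(G.inc.mulVec lam) + (selE n p).mulVec u - d) :
    ∑ j, u j = ∑ i, d i := by
  have h2 : ∑ i, ((0 : Fin n → ℝ)) i =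
      ∑ i, (-(G.inc.mulVec lam) + (selE n p).mulVec u - d) i := by rw [h]
  simp only [Pi.zero_apply, Pi.sub_apply, Pi.add_apply, Pi.neg_apply,
    Finset.sum_sub_distrib, Finset.sum_add_distrib, Finset.sum_neg_distrib,
    Finset.sum_const_zero] at h2
  rw [sum_inc_mulVec, sum_selE hpn] at h2
  linarith


/-- The unique minimizer of `C(u) = ½uᵀQu + rᵀu + s` over all `u` that
are feasible (i.e. `0 = −Bλ + Eu − d` for some `λ`) is `ū = Q⁻¹(λ*·1ₚ − r)` with
`λ* = (1ₙᵀd + 1ₚᵀQ⁻¹r)/(1ₚᵀQ⁻¹1ₚ)`: `ū` is feasible and `C(ū) < C(u)` for every other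
feasible `u ≠ ū`. -/
theorem uOpt_is_unique_minimizer {n m p : ℕ} (hp : 0 < p) (hpn : p ≤ n)
    (G : OrientedGraph n m) (hG : G.Connected)
    (q r : Fin p → ℝ) (hq : ∀ i, 0 < q i) (s : ℝ) (d : Fin n → ℝ) :
    (∃ lam : Fin m → ℝ,
      0 = -(G.inc.mulVec lam) + (selE n p).mulVec (uOpt q r d) - d) ∧
    ∀ u : Fin p → ℝ,
      (∃ lam : Fin m → ℝ, 0 = -(G.inc.mulVec lam) + (selE n p).mulVec u - d) →
      u ≠ uOpt q r d → cost q r s (uOpt q r d) < cost q r s u := by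
  have hn : 0 < n := lt_of_lt_of_le hp hpn
  have hSq : (0:ℝ) < ∑ i, (q i)⁻¹ :=
    Finset.sum_pos (fun i _ => inv_pos.2 (hq i)) ⟨⟨0, hp⟩, Finset.mem_univ _⟩
  set v := uOpt q r d with hv
  -- sum of the optimal input
  have hsum_v : ∑ j, v j = ∑ i, d i := by
    have he : ∀ i : Fin p, v i = lamStar q r d * (q i)⁻¹ - r i / q i := by
      intro i; rw [hv]; unfold uOpt; rw [sub_div, div_eq_mul_inv]
    rw [Finset.sum_congr rfl fun i _ => he i, Finset.sum_sub_distrib, ← Finset.mul_sum]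
    unfold lamStar
    rw [div_mul_cancel₀ _ (ne_of_gt hSq)]
    ring
  -- key identity q i * v i = lamStar - r i
  have hkey : ∀ i, q i * v i = lamStar q r d - r i := by
    intro i; rw [hv]; unfold uOpt
    rw [mul_comm, div_mul_eq_mul_div, mul_div_assoc, div_self (ne_of_gt (hq i)), mul_one]
  constructor
  · -- feasibility
    obtain ⟨lam, hlam⟩ := exists_lam hn G hG ((selE n p).mulVec v - d) (by
      simp only [Pi.sub_apply, Finset.sum_sub_distrib]
      rw [sum_selE hpn, hsum_v, sub_self])
    exact ⟨lam, by rw [hlam]; abel⟩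
  · rintro u ⟨lam, hlam⟩ hne
    have hsum_u : ∑ j, u j = ∑ i, d i := feas_sum hpn G u d lam hlam
    have huv : ∑ j, u j = ∑ j, v j := by rw [hsum_u, hsum_v]
    -- cost difference
    have e0 : ∑ i, (2 * lamStar q r d * (u i - v i)) = 0 := by
      rw [← Finset.mul_sum, Finset.sum_sub_distrib, ← huv, sub_self, mul_zero]
    have h2 : ∑ i, q i * (u i - v i)^2 =
        ∑ i, ((q i * u i^2 + 2*(r i * u i)) - (q i * v i^2 + 2*(r i * v i))
          - 2 * lamStar q r d * (u i - v i)) :=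
      Finset.sum_congr rfl fun i _ => by linear_combination 2*(v i - u i) * (hkey i)
    have h3 : ∑ i, ((q i * u i^2 + 2*(r i * u i)) - (q i * v i^2 + 2*(r i * v i))
          - 2 * lamStar q r d * (u i - v i)) =
        ((∑ i, q i * u i^2) + 2 * ∑ i, r i * u i)
          - ((∑ i, q i * v i^2) + 2 * ∑ i, r i * v i) := by
      rw [Finset.sum_sub_distrib, Finset.sum_sub_distrib, e0, sub_zero,
        Finset.sum_add_distrib, Finset.sum_add_distrib, ← Finset.mul_sum, ← Finset.mul_sum]
    have hpos : 0 < ∑ i, q i * (u i - v i)^2 := by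
      obtain ⟨i0, hi0⟩ := Function.ne_iff.1 hne
      refine Finset.sum_pos' (fun i _ => mul_nonneg (hq i).le (sq_nonneg _))
        ⟨i0, Finset.mem_univ _, ?_⟩
      have h4 : u i0 - v i0 ≠ 0 := sub_ne_zero.2 hi0
      exact mul_pos (hq i0) (by positivity)
    rw [h3] at h2
    unfold cost
    linarith
end

section
/- Let L ∈ ℝ^{p×p} be the Laplacian matrix of a weighted directed graph that is balanced and strongly connected; i.e., L has nonpositive off-diagonal entries, L·1_p = 0 and 1_pᵀ·L = 0 (balanced), and the directed graph whose arcs are the pairs (i,j), i ≠ j, with L_{ij} < 0 is strongly connected. Then for all φ ∈ ℝ^p one has φᵀLφ ≥ 0, and φᵀLφ = 0 if and only if φ ∈ span(1_p). -/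
open Matrix BigOperators Filter Topology MeasureTheory

/-- For the Laplacian `L` of a balanced, strongly connected weighted
digraph, `φᵀLφ ≥ 0` for all `φ`, with equality iff `φ ∈ span(1ₚ)`. -/
theorem balanced_laplacian_quadratic_form {p : ℕ} (L : Matrix (Fin p) (Fin p) ℝ)
    (hL : IsBalancedStronglyConnectedLaplacian L) :
    ∀ φ : Fin p → ℝ,
      0 ≤ φ ⬝ᵥ L.mulVec φ ∧ (φ ⬝ᵥ L.mulVec φ = 0 ↔ ∃ c : ℝ, φ = fun _ => c) := by
  intro φ
  have hrow : ∀ i, ∑ j, L i j = 0 := by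
    intro i
    have := congrFun hL.rowsum i
    simpa [Matrix.mulVec, dotProduct] using this
  have hcol : ∀ j, ∑ i, L i j = 0 := by
    intro j
    have := congrFun hL.colsum j
    simpa [Matrix.vecMul, dotProduct] using this
  -- key identity
  have key : φ ⬝ᵥ L.mulVec φ = (1/2) * ∑ i, ∑ j, (-(L i j)) * (φ i - φ j)^2 := by
    have expand : ∀ i j : Fin p, (-(L i j)) * (φ i - φ j)^2
        = 2*(φ i * (L i j * φ j)) - φ i^2 * L i j - φ j^2 * L i j := by intros; ring
    have h1 : ∀ i : Fin p, ∑ j, (-(L i j)) * (φ i - φ j)^2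
        = (∑ j, 2*(φ i * (L i j * φ j))) - (∑ j, φ i^2 * L i j) - (∑ j, φ j^2 * L i j) := by
      intro i
      simp only [expand]
      rw [Finset.sum_sub_distrib, Finset.sum_sub_distrib]
    simp only [h1]
    rw [Finset.sum_sub_distrib, Finset.sum_sub_distrib]
    have hA : ∑ i : Fin p, ∑ j, φ i^2 * L i j = 0 := by
      refine Finset.sum_eq_zero fun i _ => ?_
      rw [← Finset.mul_sum, hrow i, mul_zero]
    have hB : ∑ i : Fin p, ∑ j, φ j^2 * L i j = 0 := by
      rw [Finset.sum_comm]
      refine Finset.sum_eq_zero fun j _ => ?_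
      rw [← Finset.mul_sum, hcol j, mul_zero]
    rw [hA, hB]
    simp only [dotProduct, Matrix.mulVec, dotProduct, ← Finset.mul_sum]
    ring
  have term_nonneg : ∀ i ∈ Finset.univ, (0:ℝ) ≤ ∑ j, (-(L i j)) * (φ i - φ j)^2 := by
    intro i _
    refine Finset.sum_nonneg fun j _ => ?_
    by_cases h : i = j
    · subst h; simp
    · exact mul_nonneg (by linarith [hL.offdiag_nonpos i j h]) (sq_nonneg _)
  have hnn : 0 ≤ φ ⬝ᵥ L.mulVec φ := by
    rw [key]
    have := Finset.sum_nonneg term_nonneg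
    linarith
  refine ⟨hnn, ?_, ?_⟩
  · intro hzero
    have hSzero : ∑ i : Fin p, ∑ j, (-(L i j)) * (φ i - φ j)^2 = 0 := by
      rw [key] at hzero; linarith
    have houter := (Finset.sum_eq_zero_iff_of_nonneg term_nonneg).mp hSzero
    have hterm : ∀ i j : Fin p, (-(L i j)) * (φ i - φ j)^2 = 0 := by
      intro i j
      have hi := houter i (Finset.mem_univ i)
      have inner_nonneg : ∀ j ∈ Finset.univ, (0:ℝ) ≤ (-(L i j)) * (φ i - φ j)^2 := by
        intro j _
        by_cases h : i = j
        · subst h; simp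
        · exact mul_nonneg (by linarith [hL.offdiag_nonpos i j h]) (sq_nonneg _)
      exact (Finset.sum_eq_zero_iff_of_nonneg inner_nonneg).mp hi j (Finset.mem_univ j)
    have hedge : ∀ a b : Fin p, a ≠ b ∧ L a b < 0 → φ a = φ b := by
      rintro a b ⟨hab, hlt⟩
      have h := hterm a b
      have hpos : (0:ℝ) < -(L a b) := by linarith
      have : (φ a - φ b)^2 = 0 := by
        rcases mul_eq_zero.mp h with h' | h'
        · exact absurd h' (ne_of_gt hpos)
        · exact h'
      have := pow_eq_zero_iff (n := 2) (by norm_num) |>.mp this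
      linarith
    rcases Nat.eq_zero_or_pos p with hp | hp
    · subst hp
      exact ⟨0, funext fun i => i.elim0⟩
    · set i0 : Fin p := ⟨0, hp⟩
      refine ⟨φ i0, funext fun j => ?_⟩
      have h := hL.sconn i0 j
      induction h with
      | refl => rfl
      | tail _ hbc ih => rw [← ih, ← hedge _ _ hbc]
  · rintro ⟨c, rfl⟩
    have : L.mulVec (fun _ => c) = 0 := by
      have : (fun _ : Fin p => c) = c • (fun _ : Fin p => (1:ℝ)) := by
        funext i; simp
      rw [this, Matrix.mulVec_smul, hL.rowsum, smul_zero]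
    rw [this]
    simp
end

section
/- Suppose: (i) G is a connected undirected graph with incidence matrix B and E = [I_p;0] with p ≥ 1; (ii) for each i, ȳ_i lies in the range of the continuous strictly increasing function h_i; (iii) each ū_i lies in the range of the continuous strictly increasing function g_i, where ū = Q⁻¹(λ*·1_p − r), λ* = (1_nᵀd + 1_pᵀQ⁻¹r)/(1_pᵀQ⁻¹1_p); (iv) there exists λ̄ ∈ ℝ^m with Bλ̄ = Eū − d and λ̄_k in the range of the continuous strictly increasing function f_k for every k; (v) L ∈ ℝ^{p×p} is the Laplacian of a balanced strongly connected digraph. Then there exists (x̄, μ̄, ξ̄, θ̄, φ̄) satisfying the equilibrium equations: 0 = −B f(μ̄) + E g(θ̄) − d; 0 = Bᵀ(h(x̄) − ȳ) − (f(μ̄) − ξ̄); 0 = f(μ̄) − ξ̄; 0 = −Eᵀ(h(x̄) − ȳ) − (g(θ̄) − φ̄); 0 = (g(θ̄) − φ̄) − Q L (Q φ̄ + r). -/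
open Matrix BigOperators Filter Topology MeasureTheory

/-- Existence of an equilibrium of the closed-loop system. -/
theorem equilibrium_exists {n m p : ℕ} (hp : 0 < p) (hpn : p ≤ n)
    (G : OrientedGraph n m) (hG : G.Connected)
    (h : Fin n → ℝ → ℝ) (hh : ∀ i, Continuous (h i) ∧ StrictMono (h i))
    (f : Fin m → ℝ → ℝ) (hf : ∀ k, Continuous (f k) ∧ StrictMono (f k))
    (g : Fin p → ℝ → ℝ) (hg : ∀ i, Continuous (g i) ∧ StrictMono (g i))
    (q r : Fin p → ℝ) (hq : ∀ i, 0 < q i) (d ybar : Fin n → ℝ)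
    (hy : ∀ i, ybar i ∈ Set.range (h i))
    (hu : ∀ i, uOpt q r d i ∈ Set.range (g i))
    (hlam : ∃ lb : Fin m → ℝ,
      G.inc.mulVec lb = (selE n p).mulVec (uOpt q r d) - d ∧
      ∀ k, lb k ∈ Set.range (f k))
    (L : Matrix (Fin p) (Fin p) ℝ) (hL : IsBalancedStronglyConnectedLaplacian L) :
    ∃ (xb : Fin n → ℝ) (mb xib : Fin m → ℝ) (thb phb : Fin p → ℝ),
      0 = -(G.inc.mulVec (cw f mb)) + (selE n p).mulVec (cw g thb) - d ∧
      0 = (G.inc)ᵀ.mulVec (cw h xb - ybar) - (cw f mb - xib) ∧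
      0 = cw f mb - xib ∧
      0 = -((selE n p)ᵀ.mulVec (cw h xb - ybar)) - (cw g thb - phb) ∧
      0 = (cw g thb - phb) -
        (Matrix.diagonal q).mulVec (L.mulVec ((Matrix.diagonal q).mulVec phb + r)) := by
  obtain ⟨lb, hlb1, hlb2⟩ := hlam
  choose xb hxb using hy
  choose mb hmb using hlb2
  choose thb hthb using hu
  have hfm : cw f mb = lb := funext hmb
  have hhx : cw h xb = ybar := funext hxb
  have hgt : cw g thb = uOpt q r d := funext hthb
  have hconst : (Matrix.diagonal q).mulVec (cw g thb) + r
      = fun _ => lamStar q r d := by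
    funext i
    have hqi := (hq i).ne'
    simp only [Pi.add_apply, Matrix.mulVec_diagonal, hgt, uOpt]
    field_simp
    ring
  have hL0 : L.mulVec (fun _ => lamStar q r d) = 0 := by
    have : (fun _ : Fin p => lamStar q r d) = lamStar q r d • (fun _ : Fin p => (1:ℝ)) := by
      funext _; simp
    rw [this, Matrix.mulVec_smul, hL.rowsum, smul_zero]
  refine ⟨xb, mb, cw f mb, thb, cw g thb, ?_, ?_, ?_, ?_, ?_⟩
  · rw [hfm, hgt, hlb1]; abel
  · rw [hhx, sub_self, Matrix.mulVec_zero, sub_self, sub_zero]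
  · rw [sub_self]
  · rw [hhx, sub_self, Matrix.mulVec_zero, sub_self, neg_zero, sub_zero]
  · rw [sub_self, hconst, hL0, Matrix.mulVec_zero, sub_zero]
end

section
/- Let (x̄, μ̄, ξ̄, θ̄) satisfy 0 = −B f(μ̄) + E g(θ̄) − d, 0 = Bᵀ(h(x̄) − ȳ) − (f(μ̄) − ξ̄) and ξ̄ = f(μ̄). Let t ↦ (x(t), μ(t), ξ(t)) be differentiable and satisfy, for a given curve t ↦ θ(t), the equations T_x ẋ = −B f(μ) + E g(θ) − d, T_μ μ̇ = Bᵀ(h(x) − ȳ) − (f(μ) − ξ), T_ξ ξ̇ = f(μ) − ξ. Then the storage function V₁(t) = Σ_i T_{x,i} ∫_{x̄_i}^{x_i(t)} (h_i(y) − h_i(x̄_i)) dy + Σ_k T_{μ,k} ∫_{μ̄_k}^{μ_k(t)} (f_k(y) − f_k(μ̄_k)) dy + ½ (ξ(t) − ξ̄)ᵀ T_ξ (ξ(t) − ξ̄) is differentiable with dV₁/dt = (h(x) − h(x̄))ᵀ E (g(θ) − g(θ̄)) − ‖f(μ) − ξ‖². -/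
open Matrix BigOperators Filter Topology MeasureTheory

/-- Incremental passivity of the network with the flow controller:
the storage function `V₁` satisfies
`dV₁/dt = (h(x)−h(x̄))ᵀ E (g(θ)−g(θ̄)) − ‖f(μ)−ξ‖²` along solutions. -/
theorem storage_V1_derivative {n m p : ℕ} (hpn : p ≤ n) (G : OrientedGraph n m)
    (h : Fin n → ℝ → ℝ) (hh : ∀ i, ContDiff ℝ 1 (h i) ∧ StrictMono (h i))
    (f : Fin m → ℝ → ℝ) (hf : ∀ k, ContDiff ℝ 1 (f k) ∧ StrictMono (f k))
    (g : Fin p → ℝ → ℝ) (hg : ∀ i, ContDiff ℝ 1 (g i) ∧ StrictMono (g i))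
    (Tx : Fin n → ℝ) (hTx : ∀ i, 0 < Tx i)
    (Tm Txi : Fin m → ℝ) (hTm : ∀ k, 0 < Tm k) (hTxi : ∀ k, 0 < Txi k)
    (d ybar : Fin n → ℝ)
    -- the equilibrium
    (xb : Fin n → ℝ) (mb xib : Fin m → ℝ) (thb : Fin p → ℝ)
    (heq1 : 0 = -(G.inc.mulVec (cw f mb)) + (selE n p).mulVec (cw g thb) - d)
    (heq2 : 0 = (G.inc)ᵀ.mulVec (cw h xb - ybar) - (cw f mb - xib))
    (heq3 : xib = cw f mb)
    -- the solution, for a given curve θ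
    (x x' : ℝ → Fin n → ℝ) (μ ξ μ' ξ' : ℝ → Fin m → ℝ) (θ : ℝ → Fin p → ℝ)
    (hx : ∀ t i, HasDerivAt (fun s => x s i) (x' t i) t)
    (hμ : ∀ t k, HasDerivAt (fun s => μ s k) (μ' t k) t)
    (hξ : ∀ t k, HasDerivAt (fun s => ξ s k) (ξ' t k) t)
    (hxeq : ∀ t, (fun i => Tx i * x' t i) =
      -(G.inc.mulVec (cw f (μ t))) + (selE n p).mulVec (cw g (θ t)) - d)
    (hμeq : ∀ t, (fun k => Tm k * μ' t k) =
      (G.inc)ᵀ.mulVec (cw h (x t) - ybar) - (cw f (μ t) - ξ t))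
    (hξeq : ∀ t, (fun k => Txi k * ξ' t k) = cw f (μ t) - ξ t) :
    ∀ t : ℝ, HasDerivAt (fun s =>
        (∑ i, Tx i * ∫ y in (xb i)..(x s i), (h i y - h i (xb i))) +
        (∑ k, Tm k * ∫ y in (mb k)..(μ s k), (f k y - f k (mb k))) +
        (1 / 2) * ∑ k, Txi k * (ξ s k - xib k) ^ 2)
      ((cw h (x t) - cw h xb) ⬝ᵥ (selE n p).mulVec (cw g (θ t) - cw g thb) -
        ∑ k, (f k (μ t k) - ξ t k) ^ 2) t := by
  intro t
  -- notation
  set B := G.inc with hB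
  set E := selE n p with hE
  set A : Fin n → ℝ := cw h (x t) - cw h xb with hA
  set w : Fin m → ℝ := cw f (μ t) - cw f mb with hw
  set z : Fin m → ℝ := cw f (μ t) - ξ t with hz
  set Δg : Fin p → ℝ := cw g (θ t) - cw g thb with hΔg
  -- FTC-based derivatives
  have h1 : ∀ i, HasDerivAt (fun s => ∫ y in (xb i)..(x s i), (h i y - h i (xb i)))
      ((h i (x t i) - h i (xb i)) * x' t i) t := by
    intro i
    have hc : Continuous fun y => h i y - h i (xb i) :=
      (hh i).1.continuous.sub continuous_const
    have hd : HasDerivAt (fun u => ∫ y in (xb i)..u, (h i y - h i (xb i)))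
        (h i (x t i) - h i (xb i)) (x t i) :=
      intervalIntegral.integral_hasDerivAt_right (hc.intervalIntegrable _ _)
        (hc.stronglyMeasurableAtFilter _ _) hc.continuousAt
    exact hd.comp t (hx t i)
  have h2 : ∀ k, HasDerivAt (fun s => ∫ y in (mb k)..(μ s k), (f k y - f k (mb k)))
      ((f k (μ t k) - f k (mb k)) * μ' t k) t := by
    intro k
    have hc : Continuous fun y => f k y - f k (mb k) :=
      (hf k).1.continuous.sub continuous_const
    have hd : HasDerivAt (fun u => ∫ y in (mb k)..u, (f k y - f k (mb k)))
        (f k (μ t k) - f k (mb k)) (μ t k) :=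
      intervalIntegral.integral_hasDerivAt_right (hc.intervalIntegrable _ _)
        (hc.stronglyMeasurableAtFilter _ _) hc.continuousAt
    exact hd.comp t (hμ t k)
  have h3 : ∀ k, HasDerivAt (fun s => (ξ s k - xib k) ^ 2)
      ((2 : ℕ) * (ξ t k - xib k) ^ 1 * ξ' t k) t := by
    intro k
    exact ((hξ t k).sub_const (xib k)).pow 2
  have hD : HasDerivAt (fun s =>
        (∑ i, Tx i * ∫ y in (xb i)..(x s i), (h i y - h i (xb i))) +
        (∑ k, Tm k * ∫ y in (mb k)..(μ s k), (f k y - f k (mb k))) +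
        (1 / 2) * ∑ k, Txi k * (ξ s k - xib k) ^ 2)
      ((∑ i, Tx i * ((h i (x t i) - h i (xb i)) * x' t i)) +
        (∑ k, Tm k * ((f k (μ t k) - f k (mb k)) * μ' t k)) +
        (1 / 2) * ∑ k, Txi k * ((2 : ℕ) * (ξ t k - xib k) ^ 1 * ξ' t k)) t := by
    refine HasDerivAt.add (HasDerivAt.add ?_ ?_) ?_
    · exact HasDerivAt.fun_sum fun i _ => (h1 i).const_mul (Tx i)
    · exact HasDerivAt.fun_sum fun k _ => (h2 k).const_mul (Tm k)
    · exact (HasDerivAt.fun_sum fun k _ => (h3 k).const_mul (Txi k)).const_mul (1 / 2)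
  -- Now show the derivative value equals the claimed one.
  convert hD using 1
  -- componentwise consequences of the equations
  have c1 : ∀ i, Tx i * x' t i = -(B.mulVec w) i + (E.mulVec Δg) i := by
    intro i
    have e1 := congrFun (hxeq t) i
    have e2 := congrFun heq1 i
    simp only [hw, hΔg, Matrix.mulVec_sub, Pi.sub_apply, Pi.add_apply, Pi.neg_apply,
      Pi.zero_apply] at e1 e2 ⊢
    linarith
  have c2 : ∀ k, Tm k * μ' t k = (Bᵀ.mulVec A) k - z k := by
    intro k
    have e1 := congrFun (hμeq t) k
    have e2 := congrFun heq2 k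
    rw [heq3] at e2
    have hAeq : cw h (x t) - ybar = A + (cw h xb - ybar) := by
      funext j; simp only [hA, Pi.add_apply, Pi.sub_apply]; ring
    rw [hAeq] at e1
    simp only [hz, Matrix.mulVec_add, Pi.sub_apply, Pi.add_apply, Pi.zero_apply,
      sub_self] at e1 e2 ⊢
    linarith
  have c3 : ∀ k, Txi k * ξ' t k = z k := fun k => congrFun (hξeq t) k
  have hxibk : ∀ k, xib k = f k (mb k) := by
    intro k; rw [heq3]; rfl
  -- rewrite the three sums
  have s1 : ∑ i, Tx i * ((h i (x t i) - h i (xb i)) * x' t i)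
      = -(A ⬝ᵥ B.mulVec w) + A ⬝ᵥ E.mulVec Δg := by
    rw [dotProduct, dotProduct, ← Finset.sum_neg_distrib,
      ← Finset.sum_add_distrib]
    refine Finset.sum_congr rfl fun i _ => ?_
    have : Tx i * ((h i (x t i) - h i (xb i)) * x' t i)
        = (h i (x t i) - h i (xb i)) * (Tx i * x' t i) := by ring
    rw [this, c1 i]
    have hAi : A i = h i (x t i) - h i (xb i) := rfl
    rw [← hAi]; ring
  have s2 : ∑ k, Tm k * ((f k (μ t k) - f k (mb k)) * μ' t k)
      = w ⬝ᵥ Bᵀ.mulVec A - w ⬝ᵥ z := by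
    rw [dotProduct, dotProduct, ← Finset.sum_sub_distrib]
    refine Finset.sum_congr rfl fun k _ => ?_
    have : Tm k * ((f k (μ t k) - f k (mb k)) * μ' t k)
        = (f k (μ t k) - f k (mb k)) * (Tm k * μ' t k) := by ring
    rw [this, c2 k]
    have hwk : w k = f k (μ t k) - f k (mb k) := rfl
    rw [← hwk]; ring
  have s3 : (1 / 2 : ℝ) * ∑ k, Txi k * ((2 : ℕ) * (ξ t k - xib k) ^ 1 * ξ' t k)
      = (fun k => ξ t k - xib k) ⬝ᵥ z := by
    rw [dotProduct, Finset.mul_sum]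
    refine Finset.sum_congr rfl fun k _ => ?_
    have : (1 / 2 : ℝ) * (Txi k * ((2 : ℕ) * (ξ t k - xib k) ^ 1 * ξ' t k))
        = (ξ t k - xib k) * (Txi k * ξ' t k) := by push_cast; ring
    rw [this, c3 k]
  rw [s1, s2, s3]
  have hBA : A ⬝ᵥ B.mulVec w = w ⬝ᵥ Bᵀ.mulVec A := by
    rw [Matrix.dotProduct_mulVec, Matrix.mulVec_transpose, dotProduct_comm]
  have hwz : w ⬝ᵥ z - (fun k => ξ t k - xib k) ⬝ᵥ z = ∑ k, (f k (μ t k) - ξ t k) ^ 2 := by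
    rw [dotProduct, dotProduct, ← Finset.sum_sub_distrib]
    refine Finset.sum_congr rfl fun k _ => ?_
    have hwk : w k = f k (μ t k) - f k (mb k) := rfl
    have hzk : z k = f k (μ t k) - ξ t k := rfl
    rw [hwk, hzk, hxibk k]; ring
  rw [hBA]
  linarith [hwz]
end

section
/- Let (x̄, θ̄, φ̄) satisfy h(x̄) = ȳ, g(θ̄) = φ̄, and 0 = (g(θ̄) − φ̄) − Q L (Q φ̄ + r). Let t ↦ (θ(t), φ(t)) be differentiable and satisfy, for a given curve t ↦ x(t), the equations T_θ θ̇ = −Eᵀ(h(x) − ȳ) − (g(θ) − φ) and T_φ φ̇ = g(θ) − φ − Q L (Q φ + r). Then the storage function V₂(t) = Σ_i T_{θ,i} ∫_{θ̄_i}^{θ_i(t)} (g_i(y) − g_i(θ̄_i)) dy + ½ (φ(t) − φ̄)ᵀ T_φ (φ(t) − φ̄) is differentiable with dV₂/dt = −‖g(θ) − φ‖² − (φ − φ̄)ᵀ Q L Q (φ − φ̄) − (g(θ) − g(θ̄))ᵀ Eᵀ (h(x) − h(x̄)). -/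
open Matrix BigOperators Filter Topology MeasureTheory

/-- Incremental passivity of the input controller: the storage
function `V₂` satisfies
`dV₂/dt = −‖g(θ)−φ‖² − (φ−φ̄)ᵀQLQ(φ−φ̄) − (g(θ)−g(θ̄))ᵀEᵀ(h(x)−h(x̄))` along solutions. -/
theorem storage_V2_derivative {n m p : ℕ} (hpn : p ≤ n) (G : OrientedGraph n m)
    (h : Fin n → ℝ → ℝ) (hh : ∀ i, ContDiff ℝ 1 (h i) ∧ StrictMono (h i))
    (g : Fin p → ℝ → ℝ) (hg : ∀ i, ContDiff ℝ 1 (g i) ∧ StrictMono (g i))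
    (Tth Tph : Fin p → ℝ) (hTth : ∀ i, 0 < Tth i) (hTph : ∀ i, 0 < Tph i)
    (q r : Fin p → ℝ) (hq : ∀ i, 0 < q i) (ybar : Fin n → ℝ)
    (L : Matrix (Fin p) (Fin p) ℝ) (hL : IsBalancedStronglyConnectedLaplacian L)
    -- the equilibrium
    (xb : Fin n → ℝ) (thb phb : Fin p → ℝ)
    (heqx : cw h xb = ybar)
    (heqg : cw g thb = phb)
    (heq5 : 0 = (cw g thb - phb) -
      (Matrix.diagonal q).mulVec (L.mulVec ((Matrix.diagonal q).mulVec phb + r)))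
    -- the solution, for a given curve x
    (x : ℝ → Fin n → ℝ) (θ φ θ' φ' : ℝ → Fin p → ℝ)
    (hθ : ∀ t i, HasDerivAt (fun s => θ s i) (θ' t i) t)
    (hφ : ∀ t i, HasDerivAt (fun s => φ s i) (φ' t i) t)
    (hθeq : ∀ t, (fun i => Tth i * θ' t i) =
      -((selE n p)ᵀ.mulVec (cw h (x t) - ybar)) - (cw g (θ t) - φ t))
    (hφeq : ∀ t, (fun i => Tph i * φ' t i) =
      cw g (θ t) - φ t -
        (Matrix.diagonal q).mulVec (L.mulVec ((Matrix.diagonal q).mulVec (φ t) + r))) :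
    ∀ t : ℝ, HasDerivAt (fun s =>
        (∑ i, Tth i * ∫ y in (thb i)..(θ s i), (g i y - g i (thb i))) +
        (1 / 2) * ∑ i, Tph i * (φ s i - phb i) ^ 2)
      (-(∑ i, (g i (θ t i) - φ t i) ^ 2) -
        (φ t - phb) ⬝ᵥ (Matrix.diagonal q * L * Matrix.diagonal q).mulVec (φ t - phb) -
        (cw g (θ t) - cw g thb) ⬝ᵥ (selE n p)ᵀ.mulVec (cw h (x t) - cw h xb)) t := by
  intro t
  -- componentwise equations
  have hA : ∀ i, Tth i * θ' t i =
      (-((selE n p)ᵀ.mulVec (cw h (x t) - ybar)) - (cw g (θ t) - φ t)) i :=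
    fun i => congrFun (hθeq t) i
  -- `Q L (Q φ̄ + r) = 0`
  have hz0 : (Matrix.diagonal q).mulVec (L.mulVec ((Matrix.diagonal q).mulVec phb + r)) = 0 := by
    have h5 := heq5
    rw [heqg, sub_self, zero_sub] at h5
    exact neg_eq_zero.mp h5.symm
  have hz : (Matrix.diagonal q).mulVec (L.mulVec ((Matrix.diagonal q).mulVec (φ t) + r)) =
      (Matrix.diagonal q * L * Matrix.diagonal q).mulVec (φ t - phb) := by
    have e1 : (Matrix.diagonal q).mulVec (L.mulVec ((Matrix.diagonal q).mulVec (φ t) + r)) =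
        (Matrix.diagonal q).mulVec (L.mulVec ((Matrix.diagonal q).mulVec (φ t) + r))
        - (Matrix.diagonal q).mulVec (L.mulVec ((Matrix.diagonal q).mulVec phb + r)) := by
      rw [hz0, sub_zero]
    rw [e1, ← Matrix.mulVec_sub, ← Matrix.mulVec_sub, add_sub_add_right_eq_sub,
      ← Matrix.mulVec_sub, Matrix.mulVec_mulVec, Matrix.mulVec_mulVec]
  have hB : ∀ i, Tph i * φ' t i =
      (cw g (θ t) - φ t -
        (Matrix.diagonal q * L * Matrix.diagonal q).mulVec (φ t - phb)) i := by
    intro i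
    have := congrFun (hφeq t) i
    rwa [hz] at this
  have hgb : ∀ i, g i (thb i) = phb i := fun i => congrFun heqg i
  have hyb : cw h (x t) - ybar = cw h (x t) - cw h xb := by rw [heqx]
  rw [hyb] at hA
  -- the derivative with its "raw" value
  have key : HasDerivAt (fun s =>
      (∑ i, Tth i * ∫ y in (thb i)..(θ s i), (g i y - g i (thb i))) +
      (1 / 2) * ∑ i, Tph i * (φ s i - phb i) ^ 2)
      ((∑ i, Tth i * ((g i (θ t i) - g i (thb i)) * θ' t i)) +
       (1 / 2) * ∑ i, Tph i * (((2 : ℕ) * (φ t i - phb i) ^ 1) * φ' t i)) t := by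
    apply HasDerivAt.add
    · apply HasDerivAt.fun_sum
      intro i _
      apply HasDerivAt.const_mul
      have hcont : Continuous fun y => g i y - g i (thb i) :=
        ((hg i).1.continuous).sub continuous_const
      have hint : HasDerivAt (fun u => ∫ y in (thb i)..u, (g i y - g i (thb i)))
          (g i (θ t i) - g i (thb i)) (θ t i) :=
        intervalIntegral.integral_hasDerivAt_right
          (hcont.intervalIntegrable _ _)
          (hcont.stronglyMeasurableAtFilter _ _)
          hcont.continuousAt
      exact hint.comp t (hθ t i)
    · apply HasDerivAt.const_mul
      apply HasDerivAt.fun_sum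
      intro i _
      exact (((hφ t i).sub_const (phb i)).pow 2).const_mul (Tph i)
  convert key using 1
  -- now the algebra
  rw [Finset.mul_sum, ← Finset.sum_add_distrib]
  have step : ∀ i : Fin p,
      (-(g i (θ t i) - φ t i) ^ 2
        - (φ t i - phb i) *
            ((Matrix.diagonal q * L * Matrix.diagonal q).mulVec (φ t - phb)) i
        - (g i (θ t i) - g i (thb i)) *
            ((selE n p)ᵀ.mulVec (cw h (x t) - cw h xb)) i) =
      (Tth i * ((g i (θ t i) - g i (thb i)) * θ' t i) +
        1 / 2 * (Tph i * (((2 : ℕ) * (φ t i - phb i) ^ 1) * φ' t i))) := by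
    intro i
    have e1 : Tth i * ((g i (θ t i) - g i (thb i)) * θ' t i)
        = (g i (θ t i) - g i (thb i)) * (Tth i * θ' t i) := by ring
    have e2 : 1 / 2 * (Tph i * (((2 : ℕ) * (φ t i - phb i) ^ 1) * φ' t i))
        = (φ t i - phb i) * (Tph i * φ' t i) := by push_cast; ring
    rw [e1, e2, hA i, hB i]
    simp only [Pi.sub_apply, Pi.neg_apply, cw]
    rw [hgb i]
    ring
  calc -(∑ i, (g i (θ t i) - φ t i) ^ 2) -
        (φ t - phb) ⬝ᵥ (Matrix.diagonal q * L * Matrix.diagonal q).mulVec (φ t - phb) -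
        (cw g (θ t) - cw g thb) ⬝ᵥ (selE n p)ᵀ.mulVec (cw h (x t) - cw h xb)
      = ∑ i, (-(g i (θ t i) - φ t i) ^ 2
          - (φ t i - phb i) *
              ((Matrix.diagonal q * L * Matrix.diagonal q).mulVec (φ t - phb)) i
          - (g i (θ t i) - g i (thb i)) *
              ((selE n p)ᵀ.mulVec (cw h (x t) - cw h xb)) i) := by
        simp only [dotProduct, Pi.sub_apply, cw, Finset.sum_sub_distrib,
          Finset.sum_neg_distrib]
    _ = _ := Finset.sum_congr rfl fun i _ => step i
end

section
/- Let (x̄, μ̄, ξ̄, θ̄, φ̄) satisfy the equilibrium equations 0 = −B f(μ̄) + E g(θ̄) − d; 0 = Bᵀ(h(x̄) − ȳ) − (f(μ̄) − ξ̄); 0 = f(μ̄) − ξ̄; 0 = −Eᵀ(h(x̄) − ȳ) − (g(θ̄) − φ̄); 0 = (g(θ̄) − φ̄) − Q L (Q φ̄ + r), and additionally h(x̄) = ȳ and g(θ̄) = φ̄. Then along any differentiable solution t ↦ (x, μ, ξ, θ, φ) of the closed-loop system T_x ẋ = −B f(μ) + E g(θ) − d; T_μ μ̇ = Bᵀ(h(x)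 − ȳ) − (f(μ) − ξ); T_ξ ξ̇ = f(μ) − ξ; T_θ θ̇ = −Eᵀ(h(x) − ȳ) − (g(θ) − φ); T_φ φ̇ = g(θ) − φ − Q L (Q φ + r), the function V = V₁ + V₂ (sum of the two incremental storage functions) satisfies dV/dt = −(φ − φ̄)ᵀ Q L Q (φ − φ̄) − ‖g(θ) − φ‖² − ‖f(μ) − ξ‖² ≤ 0. -/
open Matrix BigOperators Filter Topology MeasureTheory

section Aux

open Matrix

/-- Derivative of an incremental storage integral along a solution. -/
lemma aux_int_deriv (h : ℝ → ℝ) (hc : Continuous h) (a : ℝ) (u : ℝ → ℝ) (u' t : ℝ)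
    (hu : HasDerivAt u u' t) :
    HasDerivAt (fun s => ∫ y in a..(u s), (h y - h a)) ((h (u t) - h a) * u') t := by
  have hc' : Continuous fun y => h y - h a := hc.sub continuous_const
  have H := ((hc'.integral_hasStrictDerivAt a (u t)).hasDerivAt).comp t hu
  exact H

/-- A balanced Laplacian is positive semidefinite. -/
lemma aux_lap_nonneg {p : ℕ} (L : Matrix (Fin p) (Fin p) ℝ)
    (hoff : ∀ i j, i ≠ j → L i j ≤ 0)
    (hrow : ∀ i, ∑ j, L i j = 0) (hcol : ∀ j, ∑ i, L i j = 0)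
    (y : Fin p → ℝ) : 0 ≤ y ⬝ᵥ L.mulVec y := by
  have hdot : y ⬝ᵥ L.mulVec y = ∑ i, ∑ j, y i * L i j * y j := by
    simp [dotProduct, Matrix.mulVec, Finset.mul_sum, mul_assoc]
  have hzero : ∑ i, ∑ j, L i j * (y i - y j) ^ 2 = -2 * ∑ i, ∑ j, y i * L i j * y j := by
    have step : ∑ i, ∑ j, L i j * (y i - y j) ^ 2
        = ∑ i, ∑ j, (y i ^ 2 * L i j) + ∑ i, ∑ j, (y j ^ 2 * L i j)
          - 2 * ∑ i, ∑ j, (y i * L i j * y j) := by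
      simp_rw [Finset.mul_sum, ← Finset.sum_add_distrib, ← Finset.sum_sub_distrib]
      exact Finset.sum_congr rfl fun i _ => Finset.sum_congr rfl fun j _ => by ring
    rw [step]
    have t1 : ∑ i, ∑ j, (y i ^ 2 * L i j) = 0 := by
      simp_rw [← Finset.mul_sum, hrow, mul_zero, Finset.sum_const_zero]
    have t2 : ∑ i, ∑ j, (y j ^ 2 * L i j) = 0 := by
      rw [Finset.sum_comm]
      simp_rw [← Finset.mul_sum, hcol, mul_zero, Finset.sum_const_zero]
    rw [t1, t2]
    ring
  have hnp : ∑ i, ∑ j, L i j * (y i - y j) ^ 2 ≤ 0 := by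
    apply Finset.sum_nonpos
    intro i _
    apply Finset.sum_nonpos
    intro j _
    by_cases hij : i = j
    · subst hij; simp
    · exact mul_nonpos_of_nonpos_of_nonneg (hoff i j hij) (sq_nonneg _)
  rw [hdot]
  nlinarith [hzero, hnp]

/-- The key algebraic cancellation. -/
lemma aux_key {n m p : ℕ} (B : Matrix (Fin n) (Fin m) ℝ) (E : Matrix (Fin n) (Fin p) ℝ)
    (Q L : Matrix (Fin p) (Fin p) ℝ)
    (a : Fin n → ℝ) (u v xib : Fin m → ℝ) (w z phb r : Fin p → ℝ) (d : Fin n → ℝ)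
    (hd : d = -(B *ᵥ xib) + E *ᵥ phb)
    (hQ : Q *ᵥ (L *ᵥ (Q *ᵥ phb + r)) = 0) :
    a ⬝ᵥ (-(B *ᵥ u) + E *ᵥ w - d)
      + (u - xib) ⬝ᵥ (Bᵀ *ᵥ a - (u - v))
      + (v - xib) ⬝ᵥ (u - v)
      + (w - phb) ⬝ᵥ (-(Eᵀ *ᵥ a) - (w - z))
      + (z - phb) ⬝ᵥ (w - z - Q *ᵥ (L *ᵥ (Q *ᵥ z + r)))
    = -((z - phb) ⬝ᵥ (Q * L * Q) *ᵥ (z - phb)) - (w - z) ⬝ᵥ (w - z) - (u - v) ⬝ᵥ (u - v) := by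
  have hBa : ∀ (c : Fin m → ℝ), a ⬝ᵥ (B *ᵥ c) = c ⬝ᵥ (Bᵀ *ᵥ a) := by
    intro c
    rw [Matrix.dotProduct_mulVec, Matrix.mulVec_transpose, dotProduct_comm]
  have hEa : ∀ (c : Fin p → ℝ), a ⬝ᵥ (E *ᵥ c) = c ⬝ᵥ (Eᵀ *ᵥ a) := by
    intro c
    rw [Matrix.dotProduct_mulVec, Matrix.mulVec_transpose, dotProduct_comm]
  have hQL : Q *ᵥ (L *ᵥ (Q *ᵥ z + r)) = (Q * L * Q) *ᵥ (z - phb) := by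
    have e : Q *ᵥ (L *ᵥ (Q *ᵥ z + r)) = Q *ᵥ (L *ᵥ (Q *ᵥ z + r)) - Q *ᵥ (L *ᵥ (Q *ᵥ phb + r)) := by
      rw [hQ, sub_zero]
    rw [e, ← Matrix.mulVec_sub, ← Matrix.mulVec_sub]
    have e2 : Q *ᵥ z + r - (Q *ᵥ phb + r) = Q *ᵥ (z - phb) := by
      rw [Matrix.mulVec_sub]; abel
    rw [e2, Matrix.mulVec_mulVec, Matrix.mulVec_mulVec]
  have h1 : a ⬝ᵥ (-(B *ᵥ u) + E *ᵥ w - d)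
      = (w - phb) ⬝ᵥ (Eᵀ *ᵥ a) - (u - xib) ⬝ᵥ (Bᵀ *ᵥ a) := by
    rw [hd]
    have e : -(B *ᵥ u) + E *ᵥ w - (-(B *ᵥ xib) + E *ᵥ phb)
        = -(B *ᵥ (u - xib)) + E *ᵥ (w - phb) := by
      rw [Matrix.mulVec_sub, Matrix.mulVec_sub]; abel
    rw [e, dotProduct_add, dotProduct_neg, hBa, hEa]
    ring
  have h2 : (u - xib) ⬝ᵥ (Bᵀ *ᵥ a - (u - v))
      = (u - xib) ⬝ᵥ (Bᵀ *ᵥ a) - (u - xib) ⬝ᵥ (u - v) := dotProduct_sub _ _ _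
  have h4 : (w - phb) ⬝ᵥ (-(Eᵀ *ᵥ a) - (w - z))
      = -((w - phb) ⬝ᵥ (Eᵀ *ᵥ a)) - (w - phb) ⬝ᵥ (w - z) := by
    rw [dotProduct_sub, dotProduct_neg]
  have h5 : (z - phb) ⬝ᵥ (w - z - Q *ᵥ (L *ᵥ (Q *ᵥ z + r)))
      = (z - phb) ⬝ᵥ (w - z) - (z - phb) ⬝ᵥ ((Q * L * Q) *ᵥ (z - phb)) := by
    rw [dotProduct_sub, hQL]
  have hA : (v - xib) ⬝ᵥ (u - v) - (u - xib) ⬝ᵥ (u - v) = -((u - v) ⬝ᵥ (u - v)) := by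
    rw [← sub_dotProduct]
    have e : v - xib - (u - xib) = -(u - v) := by abel
    rw [e, neg_dotProduct]
  have hB : (z - phb) ⬝ᵥ (w - z) - (w - phb) ⬝ᵥ (w - z) = -((w - z) ⬝ᵥ (w - z)) := by
    rw [← sub_dotProduct]
    have e : z - phb - (w - phb) = -(w - z) := by abel
    rw [e, neg_dotProduct]
  rw [h1, h2, h4, h5]
  linarith [hA, hB]

end Aux

/-- Along solutions of the closed-loop system, the total storage
function `V = V₁ + V₂` satisfies
`dV/dt = −(φ−φ̄)ᵀQLQ(φ−φ̄) − ‖g(θ)−φ‖² − ‖f(μ)−ξ‖² ≤ 0`. -/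
theorem storage_V_derivative_nonpos {n m p : ℕ} (hpn : p ≤ n) (G : OrientedGraph n m)
    (h : Fin n → ℝ → ℝ) (hh : ∀ i, ContDiff ℝ 1 (h i) ∧ StrictMono (h i))
    (f : Fin m → ℝ → ℝ) (hf : ∀ k, ContDiff ℝ 1 (f k) ∧ StrictMono (f k))
    (g : Fin p → ℝ → ℝ) (hg : ∀ i, ContDiff ℝ 1 (g i) ∧ StrictMono (g i))
    (Tx : Fin n → ℝ) (hTx : ∀ i, 0 < Tx i)
    (Tm Txi : Fin m → ℝ) (hTm : ∀ k, 0 < Tm k) (hTxi : ∀ k, 0 < Txi k)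
    (Tth Tph : Fin p → ℝ) (hTth : ∀ i, 0 < Tth i) (hTph : ∀ i, 0 < Tph i)
    (q r : Fin p → ℝ) (hq : ∀ i, 0 < q i) (d ybar : Fin n → ℝ)
    (L : Matrix (Fin p) (Fin p) ℝ) (hL : IsBalancedStronglyConnectedLaplacian L)
    -- the equilibrium
    (xb : Fin n → ℝ) (mb xib : Fin m → ℝ) (thb phb : Fin p → ℝ)
    (heq1 : 0 = -(G.inc.mulVec (cw f mb)) + (selE n p).mulVec (cw g thb) - d)
    (heq2 : 0 = (G.inc)ᵀ.mulVec (cw h xb - ybar) - (cw f mb - xib))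
    (heq3 : 0 = cw f mb - xib)
    (heq4 : 0 = -((selE n p)ᵀ.mulVec (cw h xb - ybar)) - (cw g thb - phb))
    (heq5 : 0 = (cw g thb - phb) -
      (Matrix.diagonal q).mulVec (L.mulVec ((Matrix.diagonal q).mulVec phb + r)))
    (heqx : cw h xb = ybar) (heqg : cw g thb = phb)
    -- the solution of the closed-loop system
    (x x' : ℝ → Fin n → ℝ) (μ ξ μ' ξ' : ℝ → Fin m → ℝ) (θ φ θ' φ' : ℝ → Fin p → ℝ)
    (hx : ∀ t i, HasDerivAt (fun s => x s i) (x' t i) t)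
    (hμ : ∀ t k, HasDerivAt (fun s => μ s k) (μ' t k) t)
    (hξ : ∀ t k, HasDerivAt (fun s => ξ s k) (ξ' t k) t)
    (hθ : ∀ t i, HasDerivAt (fun s => θ s i) (θ' t i) t)
    (hφ : ∀ t i, HasDerivAt (fun s => φ s i) (φ' t i) t)
    (hxeq : ∀ t, (fun i => Tx i * x' t i) =
      -(G.inc.mulVec (cw f (μ t))) + (selE n p).mulVec (cw g (θ t)) - d)
    (hμeq : ∀ t, (fun k => Tm k * μ' t k) =
      (G.inc)ᵀ.mulVec (cw h (x t) - ybar) - (cw f (μ t) - ξ t))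
    (hξeq : ∀ t, (fun k => Txi k * ξ' t k) = cw f (μ t) - ξ t)
    (hθeq : ∀ t, (fun i => Tth i * θ' t i) =
      -((selE n p)ᵀ.mulVec (cw h (x t) - ybar)) - (cw g (θ t) - φ t))
    (hφeq : ∀ t, (fun i => Tph i * φ' t i) =
      cw g (θ t) - φ t -
        (Matrix.diagonal q).mulVec (L.mulVec ((Matrix.diagonal q).mulVec (φ t) + r))) :
    ∀ t : ℝ,
      HasDerivAt (fun s =>
          (∑ i, Tx i * ∫ y in (xb i)..(x s i), (h i y - h i (xb i))) +
          (∑ k, Tm k * ∫ y in (mb k)..(μ s k), (f k y - f k (mb k))) +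
          (1 / 2) * (∑ k, Txi k * (ξ s k - xib k) ^ 2) +
          (∑ i, Tth i * ∫ y in (thb i)..(θ s i), (g i y - g i (thb i))) +
          (1 / 2) * (∑ i, Tph i * (φ s i - phb i) ^ 2))
        (-((φ t - phb) ⬝ᵥ (Matrix.diagonal q * L * Matrix.diagonal q).mulVec (φ t - phb)) -
          (∑ i, (g i (θ t i) - φ t i) ^ 2) - (∑ k, (f k (μ t k) - ξ t k) ^ 2)) t ∧
      (-((φ t - phb) ⬝ᵥ (Matrix.diagonal q * L * Matrix.diagonal q).mulVec (φ t - phb)) -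
          (∑ i, (g i (θ t i) - φ t i) ^ 2) - (∑ k, (f k (μ t k) - ξ t k) ^ 2)) ≤ 0 := by
  -- equilibrium facts
  have hfm : cw f mb = xib := sub_eq_zero.mp heq3.symm
  have hd : d = -(G.inc *ᵥ xib) + (selE n p) *ᵥ phb := by
    have h1 := heq1
    rw [hfm, heqg] at h1
    exact (sub_eq_zero.mp h1.symm).symm
  have hQ0 : (Matrix.diagonal q) *ᵥ (L *ᵥ ((Matrix.diagonal q) *ᵥ phb + r)) = 0 := by
    have h5 := heq5
    rw [heqg, sub_self, zero_sub] at h5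
    exact neg_eq_zero.mp h5.symm
  intro t
  -- componentwise forms of the dynamics
  have hx2 : ∀ i, Tx i * x' t i
      = (-(G.inc *ᵥ (cw f (μ t))) + (selE n p) *ᵥ (cw g (θ t)) - d) i :=
    fun i => congrFun (hxeq t) i
  have hm2 : ∀ k, Tm k * μ' t k
      = ((G.inc)ᵀ *ᵥ (cw h (x t) - ybar) - (cw f (μ t) - ξ t)) k :=
    fun k => congrFun (hμeq t) k
  have hxi2 : ∀ k, Txi k * ξ' t k = (cw f (μ t) - ξ t) k :=
    fun k => congrFun (hξeq t) k
  have hth2 : ∀ i, Tth i * θ' t i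
      = (-((selE n p)ᵀ *ᵥ (cw h (x t) - ybar)) - (cw g (θ t) - φ t)) i :=
    fun i => congrFun (hθeq t) i
  have hph2 : ∀ i, Tph i * φ' t i
      = (cw g (θ t) - φ t
          - (Matrix.diagonal q) *ᵥ (L *ᵥ ((Matrix.diagonal q) *ᵥ (φ t) + r))) i :=
    fun i => congrFun (hφeq t) i
  -- derivatives of the five pieces
  have P1 : HasDerivAt (fun s => ∑ i, Tx i * ∫ y in (xb i)..(x s i), (h i y - h i (xb i)))
      (∑ i, Tx i * ((h i (x t i) - h i (xb i)) * x' t i)) t :=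
    HasDerivAt.fun_sum fun i _ =>
      (aux_int_deriv (h i) (hh i).1.continuous (xb i) _ _ t (hx t i)).const_mul (Tx i)
  have P2 : HasDerivAt (fun s => ∑ k, Tm k * ∫ y in (mb k)..(μ s k), (f k y - f k (mb k)))
      (∑ k, Tm k * ((f k (μ t k) - f k (mb k)) * μ' t k)) t :=
    HasDerivAt.fun_sum fun k _ =>
      (aux_int_deriv (f k) (hf k).1.continuous (mb k) _ _ t (hμ t k)).const_mul (Tm k)
  have P3 : HasDerivAt (fun s => (1 / 2 : ℝ) * ∑ k, Txi k * (ξ s k - xib k) ^ 2)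
      ((1 / 2 : ℝ) * ∑ k, Txi k * (2 * (ξ t k - xib k) * ξ' t k)) t := by
    refine HasDerivAt.const_mul _ (HasDerivAt.fun_sum fun k _ => ?_)
    refine HasDerivAt.const_mul _ ?_
    simpa using ((hξ t k).sub_const (xib k)).fun_pow 2
  have P4 : HasDerivAt (fun s => ∑ i, Tth i * ∫ y in (thb i)..(θ s i), (g i y - g i (thb i)))
      (∑ i, Tth i * ((g i (θ t i) - g i (thb i)) * θ' t i)) t :=
    HasDerivAt.fun_sum fun i _ =>
      (aux_int_deriv (g i) (hg i).1.continuous (thb i) _ _ t (hθ t i)).const_mul (Tth i)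
  have P5 : HasDerivAt (fun s => (1 / 2 : ℝ) * ∑ i, Tph i * (φ s i - phb i) ^ 2)
      ((1 / 2 : ℝ) * ∑ i, Tph i * (2 * (φ t i - phb i) * φ' t i)) t := by
    refine HasDerivAt.const_mul _ (HasDerivAt.fun_sum fun i _ => ?_)
    refine HasDerivAt.const_mul _ ?_
    simpa using ((hφ t i).sub_const (phb i)).fun_pow 2
  have PT := (((P1.add P2).add P3).add P4).add P5
  -- rewrite the derivative value as dot products
  have e1 : ∑ i, Tx i * ((h i (x t i) - h i (xb i)) * x' t i)
      = (cw h (x t) - ybar) ⬝ᵥ (-(G.inc *ᵥ (cw f (μ t))) + (selE n p) *ᵥ (cw g (θ t)) - d) := by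
    simp only [dotProduct]
    refine Finset.sum_congr rfl fun i _ => ?_
    rw [← hx2 i]
    have hb : h i (xb i) = ybar i := congrFun heqx i
    simp only [Pi.sub_apply, cw, hb]
    ring
  have e2 : ∑ k, Tm k * ((f k (μ t k) - f k (mb k)) * μ' t k)
      = (cw f (μ t) - xib) ⬝ᵥ ((G.inc)ᵀ *ᵥ (cw h (x t) - ybar) - (cw f (μ t) - ξ t)) := by
    simp only [dotProduct]
    refine Finset.sum_congr rfl fun k _ => ?_
    rw [← hm2 k]
    have hb : f k (mb k) = xib k := congrFun hfm k
    simp only [Pi.sub_apply, cw, hb]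
    ring
  have e3 : (1 / 2 : ℝ) * ∑ k, Txi k * (2 * (ξ t k - xib k) * ξ' t k)
      = (ξ t - xib) ⬝ᵥ (cw f (μ t) - ξ t) := by
    rw [Finset.mul_sum]
    simp only [dotProduct]
    refine Finset.sum_congr rfl fun k _ => ?_
    rw [← hxi2 k]
    simp only [Pi.sub_apply]
    ring
  have e4 : ∑ i, Tth i * ((g i (θ t i) - g i (thb i)) * θ' t i)
      = (cw g (θ t) - phb) ⬝ᵥ (-((selE n p)ᵀ *ᵥ (cw h (x t) - ybar)) - (cw g (θ t) - φ t)) := by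
    simp only [dotProduct]
    refine Finset.sum_congr rfl fun i _ => ?_
    rw [← hth2 i]
    have hb : g i (thb i) = phb i := congrFun heqg i
    simp only [Pi.sub_apply, cw, hb]
    ring
  have e5 : (1 / 2 : ℝ) * ∑ i, Tph i * (2 * (φ t i - phb i) * φ' t i)
      = (φ t - phb) ⬝ᵥ (cw g (θ t) - φ t
          - (Matrix.diagonal q) *ᵥ (L *ᵥ ((Matrix.diagonal q) *ᵥ (φ t) + r))) := by
    rw [Finset.mul_sum]
    simp only [dotProduct]
    refine Finset.sum_congr rfl fun i _ => ?_
    rw [← hph2 i]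
    simp only [Pi.sub_apply]
    ring
  have ew : (cw g (θ t) - φ t) ⬝ᵥ (cw g (θ t) - φ t) = ∑ i, (g i (θ t i) - φ t i) ^ 2 := by
    simp [dotProduct, cw, sq]
  have eu : (cw f (μ t) - ξ t) ⬝ᵥ (cw f (μ t) - ξ t) = ∑ k, (f k (μ t k) - ξ t k) ^ 2 := by
    simp [dotProduct, cw, sq]
  have hDval :
      (∑ i, Tx i * ((h i (x t i) - h i (xb i)) * x' t i))
        + (∑ k, Tm k * ((f k (μ t k) - f k (mb k)) * μ' t k))
        + (1 / 2 : ℝ) * (∑ k, Txi k * (2 * (ξ t k - xib k) * ξ' t k))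
        + (∑ i, Tth i * ((g i (θ t i) - g i (thb i)) * θ' t i))
        + (1 / 2 : ℝ) * (∑ i, Tph i * (2 * (φ t i - phb i) * φ' t i))
      = -((φ t - phb) ⬝ᵥ (Matrix.diagonal q * L * Matrix.diagonal q).mulVec (φ t - phb)) -
          (∑ i, (g i (θ t i) - φ t i) ^ 2) - (∑ k, (f k (μ t k) - ξ t k) ^ 2) := by
    rw [e1, e2, e3, e4, e5, ← ew, ← eu]
    exact aux_key G.inc (selE n p) (Matrix.diagonal q) L (cw h (x t) - ybar)
      (cw f (μ t)) (ξ t) xib (cw g (θ t)) (φ t) phb r d hd hQ0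
  constructor
  · rw [← hDval]
    exact PT
  · -- nonpositivity
    have hrow : ∀ i, ∑ j, L i j = 0 := by
      intro i
      have := congrFun hL.rowsum i
      simpa [Matrix.mulVec, dotProduct] using this
    have hcol : ∀ j, ∑ i, L i j = 0 := by
      intro j
      have := congrFun hL.colsum j
      simpa [Matrix.vecMul, dotProduct] using this
    have hquad : 0 ≤ (φ t - phb) ⬝ᵥ (Matrix.diagonal q * L * Matrix.diagonal q).mulVec (φ t - phb) := by
      set v := φ t - phb with hv
      have e : (Matrix.diagonal q * L * Matrix.diagonal q) *ᵥ v
          = (Matrix.diagonal q) *ᵥ (L *ᵥ ((Matrix.diagonal q) *ᵥ v)) := by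
        rw [Matrix.mulVec_mulVec, Matrix.mulVec_mulVec]
      rw [e]
      have e2 : v ⬝ᵥ ((Matrix.diagonal q) *ᵥ (L *ᵥ ((Matrix.diagonal q) *ᵥ v)))
          = ((Matrix.diagonal q) *ᵥ v) ⬝ᵥ (L *ᵥ ((Matrix.diagonal q) *ᵥ v)) := by
        simp only [dotProduct, Matrix.mulVec_diagonal]
        exact Finset.sum_congr rfl fun i _ => by ring
      rw [e2]
      exact aux_lap_nonneg L hL.offdiag_nonpos hrow hcol _
    have hs1 : 0 ≤ ∑ i, (g i (θ t i) - φ t i) ^ 2 :=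
      Finset.sum_nonneg fun i _ => sq_nonneg _
    have hs2 : 0 ≤ ∑ k, (f k (μ t k) - ξ t k) ^ 2 :=
      Finset.sum_nonneg fun k _ => sq_nonneg _
    linarith
end

section
/- Let G be a connected undirected graph on node set V = {1,…,n} with oriented incidence matrix B ∈ ℝ^{n×m}, let D ∈ ℝ^{m×m} be diagonal with strictly positive diagonal entries, and set L = B D Bᵀ. Let Z ⊆ V be a zero forcing set for G. If v ∈ ℝ^n satisfies v_i = 0 for all i ∈ Z, and (L v)_i = 0 for every node i with v_i = 0, then v = 0. -/
open Matrix BigOperators Filter Topology MeasureTheory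

/-- One application of the zero-forcing color-change rule: a white node `j` becomes
black if some black node `i` has `j` as its unique white neighbor. -/
def zfStep {n m : ℕ} (G : OrientedGraph n m) (S : Set (Fin n)) : Set (Fin n) :=
  S ∪ {j | ∃ i ∈ S, G.Adj i j ∧ ∀ j', G.Adj i j' → j' ∉ S → j' = j}

/-- `Z` is a zero forcing set for `G` if iterating the color-change rule starting from
`Z` eventually colors all nodes black. -/
def IsZeroForcingSet {n m : ℕ} (G : OrientedGraph n m) (Z : Set (Fin n)) : Prop :=
  ∃ k : ℕ, (zfStep G)^[k] Z = Set.univ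

lemma inc_col_sum {n m : ℕ} (G : OrientedGraph n m) (v : Fin n → ℝ) (k : Fin m) :
    ∑ j, G.inc j k * v j = v (G.pos k) - v (G.neg k) := by
  have hne := G.ne_ends k
  have : ∀ j, G.inc j k * v j
      = (if j = G.pos k then v j else 0) - (if j = G.neg k then v j else 0) := by
    intro j
    simp only [OrientedGraph.inc, Matrix.of_apply]
    split_ifs with h1 h2 <;> simp_all <;> ring
  simp only [this, Finset.sum_sub_distrib, Finset.sum_ite_eq', Finset.mem_univ, if_true]

lemma lap_mulVec {n m : ℕ} (G : OrientedGraph n m) (dw : Fin m → ℝ) (v : Fin n → ℝ)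
    (i : Fin n) :
    (G.inc * Matrix.diagonal dw * (G.inc)ᵀ).mulVec v i
      = ∑ k, G.inc i k * dw k * (v (G.pos k) - v (G.neg k)) := by
  calc (G.inc * Matrix.diagonal dw * (G.inc)ᵀ).mulVec v i
      = ∑ j, (∑ k, G.inc i k * dw k * G.inc j k) * v j := by
        simp [Matrix.mulVec, dotProduct, Matrix.mul_apply, Matrix.diagonal_apply,
          Matrix.transpose_apply, mul_ite, mul_zero, ite_mul, zero_mul]
    _ = ∑ j, ∑ k, G.inc i k * dw k * (G.inc j k * v j) := by
        simp [Finset.sum_mul, mul_assoc]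
    _ = ∑ k, ∑ j, G.inc i k * dw k * (G.inc j k * v j) := Finset.sum_comm
    _ = ∑ k, G.inc i k * dw k * ∑ j, G.inc j k * v j := by
        simp [Finset.mul_sum]
    _ = _ := by simp [inc_col_sum]

lemma zf_step_zero {n m : ℕ} (G : OrientedGraph n m) (dw : Fin m → ℝ) (hdw : ∀ k, 0 < dw k)
    (v : Fin n → ℝ)
    (hvL : ∀ i, v i = 0 → (G.inc * Matrix.diagonal dw * (G.inc)ᵀ).mulVec v i = 0)
    (S : Set (Fin n)) (hS : ∀ i ∈ S, v i = 0) :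
    ∀ j ∈ zfStep G S, v j = 0 := by
  rintro j (hj | ⟨i, hiS, hadj, huniq⟩)
  · exact hS j hj
  by_cases hjS : j ∈ S
  · exact hS j hjS
  have hvi : v i = 0 := hS i hiS
  have hL := hvL i hvi
  rw [lap_mulVec] at hL
  have hij : i ≠ j := fun h => hjS (h ▸ hiS)
  set P : Fin m → Prop := fun k =>
    (G.pos k = i ∧ G.neg k = j) ∨ (G.pos k = j ∧ G.neg k = i) with hP
  have hPdec : DecidablePred P := fun k => by unfold P; infer_instance
  have hterm : ∀ k, G.inc i k * dw k * (v (G.pos k) - v (G.neg k))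
      = -((if P k then dw k else 0) * v j) := by
    intro k
    have hne := G.ne_ends k
    by_cases h1 : i = G.pos k
    · have hinc : G.inc i k = 1 := by simp [OrientedGraph.inc, h1]
      rw [hinc, ← h1, hvi]
      by_cases h2 : G.neg k ∈ S
      · have hv2 : v (G.neg k) = 0 := hS _ h2
        have hnP : ¬ P k := by
          rintro (⟨_, h3⟩ | ⟨h3, _⟩)
          · exact hjS (h3 ▸ h2)
          · exact hij (h1.trans h3)
        rw [hv2, if_neg hnP]
        ring
      · have hnj : G.neg k = j := huniq _ ⟨k, Or.inl ⟨h1.symm, rfl⟩⟩ h2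
        have hPk : P k := Or.inl ⟨h1.symm, hnj⟩
        rw [hnj, if_pos hPk]
        ring
    · by_cases h1' : i = G.neg k
      · have hinc : G.inc i k = -1 := by
          simp only [OrientedGraph.inc, Matrix.of_apply, if_neg (Ne.symm (fun h => h1 h.symm))]
          rw [if_pos h1']
        rw [hinc, ← h1', hvi]
        by_cases h2 : G.pos k ∈ S
        · have hv2 : v (G.pos k) = 0 := hS _ h2
          have hnP : ¬ P k := by
            rintro (⟨_, h3⟩ | ⟨h3, _⟩)
            · exact hij (h1'.trans h3)
            · exact hjS (h3 ▸ h2)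
          rw [hv2, if_neg hnP]
          ring
        · have hpj : G.pos k = j := huniq _ ⟨k, Or.inr ⟨rfl, h1'.symm⟩⟩ h2
          have hPk : P k := Or.inr ⟨hpj, h1'.symm⟩
          rw [hpj, if_pos hPk]
          ring
      · have hinc : G.inc i k = 0 := by simp [OrientedGraph.inc, h1, h1']
        have hnP : ¬ P k := by
          rintro (⟨h3, _⟩ | ⟨_, h3⟩)
          · exact h1 h3.symm
          · exact h1' h3.symm
        rw [hinc, if_neg hnP]
        ring
  rw [Finset.sum_congr rfl (fun k _ => hterm k)] at hL
  rw [Finset.sum_neg_distrib, neg_eq_zero, ← Finset.sum_mul] at hL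
  have hpos : 0 < ∑ k, (if P k then dw k else 0) := by
    obtain ⟨k0, hk0⟩ := hadj
    refine Finset.sum_pos' (fun k _ => ?_) ⟨k0, Finset.mem_univ k0, ?_⟩
    · split_ifs
      · exact (hdw _).le
      · exact le_refl 0
    · have hk0' : P k0 := hk0
      rw [if_pos hk0']; exact hdw k0
  rcases mul_eq_zero.mp hL with h | h
  · exact absurd h hpos.ne'
  · exact h

/-- Let `L = BDBᵀ` be a weighted Laplacian of a connected graph and
`Z` a zero forcing set. If `v` vanishes on `Z` and `(Lv)_i = 0` whenever `v_i = 0`,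
then `v = 0`. -/
theorem zero_forcing_laplacian {n m : ℕ} (G : OrientedGraph n m) (hG : G.Connected)
    (dw : Fin m → ℝ) (hdw : ∀ k, 0 < dw k)
    (Z : Set (Fin n)) (hZ : IsZeroForcingSet G Z)
    (v : Fin n → ℝ) (hvZ : ∀ i ∈ Z, v i = 0)
    (hvL : ∀ i, v i = 0 → (G.inc * Matrix.diagonal dw * (G.inc)ᵀ).mulVec v i = 0) :
    v = 0 := by
  obtain ⟨K, hK⟩ := hZ
  have hall : ∀ k : ℕ, ∀ i ∈ (zfStep G)^[k] Z, v i = 0 := by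
    intro k
    induction k with
    | zero => simpa using hvZ
    | succ k ih =>
      rw [Function.iterate_succ_apply']
      exact zf_step_zero G dw hdw v hvL _ ih
  funext i
  exact hall K i (hK ▸ Set.mem_univ i)
end
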